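/- Let F = {φ₁,...,φ_k} be rational maps of degrees d_i ≥ 2 and let Φ be a sequence of maps from F. Suppose P ∈ P¹(K) is a point whose Φ-orbit has no repeated points (Φ^n(P) ≠ Φ^m(P) for n ≠ m). Then there exist constants κ₁ > 0 and 0 < κ₂ < 1 depending only on d₁,...,d_k such that e_P(Φ^m) ≤ κ₁(κ₂ d₁)^m for all m ≥ 0, where d₁ = min_i d_i. -/

import Mathlib

open scoped BigOperators

/-- `seqComp φ m = φ_{m-1} ∘ ... ∘ φ_0` (with `seqComp φ 0 = id`). -/
def seqComp {X : Type*} (φ : ℕ → X → X) : ℕ → X → X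
  | 0 => id
  | n + 1 => φ n ∘ seqComp φ n

/-- If `P` has a `Φ`-orbit with no repeated points, then there are constants `κ₁ > 0` and
`0 < κ₂ < 1`, depending only on the degrees `d₁,...,d_k`, such that
`e_P(Φ^m) ≤ κ₁ (κ₂ d₁)^m` for all `m ≥ 0`, where `d₁ = min_j d_j`.
The ramification index `e` is axiomatized by multiplicativity and the
Riemann–Hurwitz identity `Σ_Q (e_Q(φ_j) − 1) = 2 d_j − 2` on `ℙ¹`. -/
theorem ram_index_orbit_no_repeat (k : ℕ) (hk : 0 < k) (dd : Fin k → ℕ)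
    (hdd : ∀ j, 2 ≤ dd j) :
    ∃ κ₁ κ₂ : ℝ, 0 < κ₁ ∧ 0 < κ₂ ∧ κ₂ < 1 ∧
      ∀ (X : Type) (φ : Fin k → X → X) (e : (X → X) → X → ℕ),
        (∀ P : X, e id P = 1) →
        (∀ (f g : X → X) (P : X), e (g ∘ f) P = e f P * e g (f P)) →
        (∀ j (x : X), 1 ≤ e (φ j) x) →
        (∀ j, (Function.support fun x : X => ((e (φ j) x : ℤ) - 1)).Finite) →
        (∀ j, (∑ᶠ x : X, ((e (φ j) x : ℤ) - 1)) = 2 * (dd j : ℤ) - 2) →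
        ∀ (w : ℕ → Fin k) (P : X),
          Function.Injective (fun n : ℕ => seqComp (fun i => φ (w i)) n P) →
          ∀ m : ℕ, (e (seqComp (fun i => φ (w i)) m) P : ℝ) ≤
            κ₁ * (κ₂ * (sInf (Set.range fun j => dd j) : ℕ)) ^ m := by
  classical
  set S : ℕ := ∑ j, (2 * dd j - 2) with hS
  refine ⟨(2 : ℝ) ^ S, 1/2, by positivity, by norm_num, by norm_num, ?_⟩
  intro X φ e he_id he_mul he_one he_fin he_RH w P hinj m
  haveI : Nonempty (Fin k) := ⟨⟨0, hk⟩⟩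
  -- d₁ ≥ 2
  have hd1 : 2 ≤ sInf (Set.range fun j => dd j) := by
    obtain ⟨j, hj⟩ := Nat.sInf_mem (Set.range_nonempty (fun j => dd j))
    rw [← hj]; exact hdd j
  set Q : ℕ → X := fun n => seqComp (fun i => φ (w i)) n P with hQ
  -- product formula
  have hprod : ∀ n, e (seqComp (fun i => φ (w i)) n) P
      = ∏ i ∈ Finset.range n, e (φ (w i)) (Q i) := by
    intro n
    induction n with
    | zero => simpa [seqComp] using he_id P
    | succ n ih =>
      rw [Finset.prod_range_succ, ← ih]
      show e (φ (w n) ∘ seqComp (fun i => φ (w i)) n) P = _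
      rw [he_mul]
  -- per-map bound on total ramification over any finite set of points
  have key : ∀ (j : Fin k) (T : Finset X),
      ∑ x ∈ T, ((e (φ j) x : ℤ) - 1) ≤ 2 * (dd j : ℤ) - 2 := by
    intro j T
    have hnn : ∀ x, 0 ≤ (e (φ j) x : ℤ) - 1 := fun x => by
      have := he_one j x; omega
    set F := (he_fin j).toFinset with hF
    have h1 : ∑ x ∈ T.filter (fun x => ((e (φ j) x : ℤ) - 1) ≠ 0),
        ((e (φ j) x : ℤ) - 1) = ∑ x ∈ T, ((e (φ j) x : ℤ) - 1) :=
      Finset.sum_filter_of_ne (fun x _ h => h)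
    have hsub : T.filter (fun x => ((e (φ j) x : ℤ) - 1) ≠ 0) ⊆ F := by
      intro x hx
      simp only [Finset.mem_filter] at hx
      simp [hF, Set.Finite.mem_toFinset, Function.mem_support, hx.2]
    calc ∑ x ∈ T, ((e (φ j) x : ℤ) - 1)
        = ∑ x ∈ T.filter (fun x => ((e (φ j) x : ℤ) - 1) ≠ 0),
            ((e (φ j) x : ℤ) - 1) := h1.symm
      _ ≤ ∑ x ∈ F, ((e (φ j) x : ℤ) - 1) :=
          Finset.sum_le_sum_of_subset_of_nonneg hsub (fun x _ _ => hnn x)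
      _ = ∑ᶠ x : X, ((e (φ j) x : ℤ) - 1) := (finsum_eq_sum _ (he_fin j)).symm
      _ = 2 * (dd j : ℤ) - 2 := he_RH j
  -- total sum bound
  have hsum : ∑ i ∈ Finset.range m, ((e (φ (w i)) (Q i) : ℤ) - 1)
      ≤ ∑ j : Fin k, (2 * (dd j : ℤ) - 2) := by
    rw [← Finset.sum_fiberwise (Finset.range m) w
        (fun i => ((e (φ (w i)) (Q i) : ℤ) - 1))]
    refine Finset.sum_le_sum fun j _ => ?_
    have hinjQ : Set.InjOn Q ((Finset.range m).filter (fun i => w i = j)) :=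
      fun a _ b _ h => hinj h
    calc ∑ i ∈ (Finset.range m).filter (fun i => w i = j),
            ((e (φ (w i)) (Q i) : ℤ) - 1)
        = ∑ i ∈ (Finset.range m).filter (fun i => w i = j),
            ((e (φ j) (Q i) : ℤ) - 1) := by
          refine Finset.sum_congr rfl fun i hi => ?_
          rw [(Finset.mem_filter.mp hi).2]
      _ = ∑ x ∈ ((Finset.range m).filter (fun i => w i = j)).image Q,
            ((e (φ j) x : ℤ) - 1) := (Finset.sum_image (f := fun x => ((e (φ j) x : ℤ) - 1)) (fun a _ b _ h => hinj h)).symm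
      _ ≤ 2 * (dd j : ℤ) - 2 := key j _
  -- convert to ℕ
  have hsumN : ∑ i ∈ Finset.range m, (e (φ (w i)) (Q i) - 1) ≤ S := by
    have h1 : ((∑ i ∈ Finset.range m, (e (φ (w i)) (Q i) - 1) : ℕ) : ℤ)
        = ∑ i ∈ Finset.range m, ((e (φ (w i)) (Q i) : ℤ) - 1) := by
      push_cast
      refine Finset.sum_congr rfl fun i _ => ?_
      have := he_one (w i) (Q i); push_cast; omega
    have h2 : ((S : ℕ) : ℤ) = ∑ j : Fin k, (2 * (dd j : ℤ) - 2) := by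
      rw [hS]; push_cast
      refine Finset.sum_congr rfl fun j _ => ?_
      have := hdd j; push_cast; omega
    have := hsum
    rw [← h1, ← h2] at this
    exact_mod_cast this
  -- product ≤ 2^S
  have hprodle : e (seqComp (fun i => φ (w i)) m) P ≤ 2 ^ S := by
    rw [hprod m]
    calc ∏ i ∈ Finset.range m, e (φ (w i)) (Q i)
        ≤ ∏ i ∈ Finset.range m, 2 ^ (e (φ (w i)) (Q i) - 1) := by
          refine Finset.prod_le_prod' fun i _ => ?_
          have h := he_one (w i) (Q i)
          have h2 := Nat.lt_two_pow_self (n := e (φ (w i)) (Q i) - 1)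
          omega
      _ = 2 ^ (∑ i ∈ Finset.range m, (e (φ (w i)) (Q i) - 1)) := by
          rw [Finset.prod_pow_eq_pow_sum]
      _ ≤ 2 ^ S := Nat.pow_le_pow_right (by norm_num) hsumN
  -- finish in ℝ
  have hbase : (1 : ℝ) ≤ 1/2 * (sInf (Set.range fun j => dd j) : ℕ) := by
    have : (2 : ℝ) ≤ ((sInf (Set.range fun j => dd j) : ℕ) : ℝ) := by exact_mod_cast hd1
    linarith
  calc (e (seqComp (fun i => φ (w i)) m) P : ℝ)
      ≤ ((2 ^ S : ℕ) : ℝ) := by exact_mod_cast hprodle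
    _ = (2 : ℝ) ^ S * 1 := by push_cast; ring
    _ ≤ (2 : ℝ) ^ S * (1/2 * (sInf (Set.range fun j => dd j) : ℕ)) ^ m := by
        refine mul_le_mul_of_nonneg_left ?_ (by positivity)
        exact one_le_pow₀ hbase
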